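/- The Conditional-Median mechanism is strategyproof: for every facility-location instance, every agent i ∈ N, and every misreported position x'ᵢ ∈ ℝ, if (w₁,w₂) is the output of the mechanism on the true instance and (w₁',w₂') is its output on the instance obtained by replacing agent i's position by x'ᵢ (keeping all approval sets and all other positions the same), then cost_i(w₁,w₂) ≤ cost_i(w₁',w₂'), where cost_i is measured with respect to agent i's true position xᵢ. -/

import Mathlib

open Finset

/-- The smallest element of `C` minimizing the distance to `p`. -/
noncomputable def tloc (C : Finset ℝ) (p : ℝ) : ℝ :=
  ((C.filter fun c => ∀ c' ∈ C, |p - c| ≤ |p - c'|).min).untopD 0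

/-- The smallest element of `C \ {tloc C p}` minimizing the distance to `p`. -/
noncomputable def sloc (C : Finset ℝ) (p : ℝ) : ℝ :=
  tloc (C.erase (tloc C p)) p

/-- The `⌈n/2⌉`-th smallest element of a multiset of reals (0 if empty). -/
noncomputable def medOf (l : Multiset ℝ) : ℝ :=
  (l.sort (· ≤ ·)).getD ((Multiset.card l + 1) / 2 - 1) 0

/-- The median position of the agents in `S` with positions `x`. -/
noncomputable def medianPos (S : Finset ℕ) (x : ℕ → ℝ) : ℝ :=
  medOf (S.val.map x)

/-- The Conditional-Median mechanism, assuming facility 1 is (weakly) more popular. -/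
noncomputable def condMedian (x : ℕ → ℝ) (N1 N2 : Finset ℕ) (C : Finset ℝ) : ℝ × ℝ :=
  if (N1 ∩ N2).card ≤ (N1 \ N2).card then
    let m1 := medianPos (N1 \ N2) x
    let m2 := medianPos N2 x
    let w1 := tloc C m1
    (w1, if tloc C m2 ≠ w1 then tloc C m2 else sloc C m2)
  else
    let m12 := medianPos (N1 ∩ N2) x
    (tloc C m12, sloc C m12)

/-- The output of the Conditional-Median mechanism (roles swapped if `|N₂| > |N₁|`). -/
noncomputable def mechOutput (x : ℕ → ℝ) (N1 N2 : Finset ℕ) (C : Finset ℝ) : ℝ × ℝ :=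
  if N2.card ≤ N1.card then condMedian x N1 N2 C
  else (condMedian x N2 N1 C).swap

/-- The cost of agent `i` at solution `y`: the distance to the farthest approved facility. -/
noncomputable def cost (x : ℕ → ℝ) (N1 N2 : Finset ℕ) (i : ℕ) (y : ℝ × ℝ) : ℝ :=
  if i ∈ N1 then
    if i ∈ N2 then max |x i - y.1| |x i - y.2| else |x i - y.1|
  else |x i - y.2|

/-- The social cost. -/
noncomputable def SC (x : ℕ → ℝ) (N1 N2 N : Finset ℕ) (y : ℝ × ℝ) : ℝ :=
  ∑ i ∈ N, cost x N1 N2 i y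

/-- The max cost. -/
noncomputable def MC (x : ℕ → ℝ) (N1 N2 N : Finset ℕ) (hN : N.Nonempty) (y : ℝ × ℝ) : ℝ :=
  N.sup' hN fun i => cost x N1 N2 i y

lemma countP_le_of_drop (l : List ℝ) (p : ℝ → Bool) (k : ℕ) (h : ∀ e ∈ l.drop k, ¬ p e) :
    l.countP p ≤ k := by
  have hsplit : l.countP p = (l.take k).countP p + (l.drop k).countP p := by
    conv_lhs => rw [← List.take_append_drop k l]; exact List.countP_append
  have h0 : (l.drop k).countP p = 0 := by
    rw [List.countP_eq_zero]; intro a ha; simpa using h a ha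
  have h1 : (l.take k).countP p ≤ k :=
    le_trans List.countP_le_length (List.length_take_le k l)
  omega

lemma countP_ge_of_take (l : List ℝ) (p : ℝ → Bool) (k : ℕ) (hk : k < l.length)
    (h : ∀ e ∈ l.take (k+1), p e) : k + 1 ≤ l.countP p := by
  have hsplit : l.countP p = (l.take (k+1)).countP p + (l.drop (k+1)).countP p := by
    conv_lhs => rw [← List.take_append_drop (k+1) l]; exact List.countP_append
  have h1 : (l.take (k+1)).countP p = (l.take (k+1)).length := List.countP_eq_length.2 h
  have h2 : (l.take (k+1)).length = k+1 := by rw [List.length_take]; omega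
  omega

lemma mem_take_le (l : List ℝ) (hs : l.Pairwise (· ≤ ·)) (k : ℕ) (hk : k < l.length)
    (e : ℝ) (he : e ∈ l.take (k+1)) : e ≤ l[k] := by
  rw [List.mem_take_iff_getElem] at he
  obtain ⟨i, hi, rfl⟩ := he
  have hi' : i < l.length := by have := min_le_right (k+1) l.length; omega
  rcases eq_or_lt_of_le (Nat.lt_succ_iff.mp (lt_of_lt_of_le hi (min_le_left _ _))) with rfl|hik
  · exact le_refl _
  · exact List.pairwise_iff_get.mp hs ⟨i,hi'⟩ ⟨k,hk⟩ hik

lemma mem_drop_ge (l : List ℝ) (hs : l.Pairwise (· ≤ ·)) (k : ℕ) (hk : k < l.length)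
    (e : ℝ) (he : e ∈ l.drop k) : l[k] ≤ e := by
  rw [List.drop_eq_getElem_cons hk] at he
  rcases List.mem_cons.mp he with rfl | he'
  · exact le_refl _
  · refine List.Pairwise.rel_of_mem_take_of_mem_drop hs ?_ he'
    rw [List.mem_take_iff_getElem]
    exact ⟨k, by omega, rfl⟩

lemma medOf_countP (t : Multiset ℝ) (ht : 0 < Multiset.card t) :
    Multiset.countP (fun e => e < medOf t) t ≤ (Multiset.card t + 1) / 2 - 1 ∧
    (Multiset.card t + 1) / 2 ≤ Multiset.countP (fun e => e ≤ medOf t) t := by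
  classical
  set l := t.sort (· ≤ ·) with hl
  have hlen : l.length = Multiset.card t := t.length_sort _
  have hs : l.Pairwise (· ≤ ·) := t.pairwise_sort _
  set k := (Multiset.card t + 1) / 2 - 1 with hk
  have hkl : k < l.length := by omega
  have hmed : medOf t = l[k] := by
    rw [medOf]; exact l.getD_eq_getElem 0 hkl
  have hcoe : ∀ (p : ℝ → Prop) (hp : DecidablePred p), Multiset.countP p t = l.countP (fun a => decide (p a)) := by
    intro p hp
    conv_lhs => rw [← t.sort_eq (· ≤ ·)]
    exact Multiset.coe_countP _ _
  constructor
  · rw [hcoe]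
    apply countP_le_of_drop
    intro e he
    have h2 := mem_drop_ge l hs k hkl e he
    simp only [decide_eq_true_eq, not_lt]
    rw [hmed]; exact h2
  · rw [hcoe]
    have hkk : k + 1 = (Multiset.card t + 1) / 2 := by omega
    rw [← hkk]
    apply countP_ge_of_take _ _ _ hkl
    intro e he
    have h2 := mem_take_le l hs k hkl e he
    simp only [decide_eq_true_eq]
    rw [hmed]; exact h2

lemma le_medOf (t : Multiset ℝ) (μ : ℝ) (ht : 0 < Multiset.card t)
    (h : Multiset.countP (fun e => e < μ) t ≤ (Multiset.card t + 1) / 2 - 1) :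
    μ ≤ medOf t := by
  classical
  set l := t.sort (· ≤ ·) with hl
  have hlen : l.length = Multiset.card t := t.length_sort _
  have hs : l.Pairwise (· ≤ ·) := t.pairwise_sort _
  set k := (Multiset.card t + 1) / 2 - 1 with hk
  have hkl : k < l.length := by omega
  have hmed : medOf t = l[k] := by
    rw [medOf]; exact l.getD_eq_getElem 0 hkl
  have hcoe : Multiset.countP (fun e => e < μ) t = l.countP (fun a => decide (a < μ)) := by
    conv_lhs => rw [← t.sort_eq (· ≤ ·)]
    exact Multiset.coe_countP _ _
  rw [hmed]
  by_contra hcon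
  push_neg at hcon
  have : k + 1 ≤ l.countP (fun a => decide (a < μ)) := by
    apply countP_ge_of_take _ _ _ hkl
    intro e he
    have := mem_take_le l hs k hkl e he
    simp only [decide_eq_true_eq]
    linarith
  omega

lemma medOf_le (t : Multiset ℝ) (μ : ℝ) (ht : 0 < Multiset.card t)
    (h : (Multiset.card t + 1) / 2 ≤ Multiset.countP (fun e => e ≤ μ) t) :
    medOf t ≤ μ := by
  classical
  set l := t.sort (· ≤ ·) with hl
  have hlen : l.length = Multiset.card t := t.length_sort _
  have hs : l.Pairwise (· ≤ ·) := t.pairwise_sort _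
  set k := (Multiset.card t + 1) / 2 - 1 with hk
  have hkl : k < l.length := by omega
  have hmed : medOf t = l[k] := by
    rw [medOf]; exact l.getD_eq_getElem 0 hkl
  have hcoe : Multiset.countP (fun e => e ≤ μ) t = l.countP (fun a => decide (a ≤ μ)) := by
    conv_lhs => rw [← t.sort_eq (· ≤ ·)]
    exact Multiset.coe_countP _ _
  rw [hmed]
  by_contra hcon
  push_neg at hcon
  have : l.countP (fun a => decide (a ≤ μ)) ≤ k := by
    apply countP_le_of_drop
    intro e he
    have := mem_drop_ge l hs k hkl e he
    simp only [decide_eq_true_eq, not_le]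
    linarith
  omega

lemma medianPos_update_of_not_mem (S : Finset ℕ) (x : ℕ → ℝ) (i : ℕ) (hi : i ∉ S) (x' : ℝ) :
    medianPos S (Function.update x i x') = medianPos S x := by
  unfold medianPos
  congr 1
  apply Multiset.map_congr rfl
  intro j hj
  have : j ≠ i := by rintro rfl; exact hi hj
  simp [Function.update_of_ne this]

lemma median_move (S : Finset ℕ) (x : ℕ → ℝ) (i : ℕ) (hi : i ∈ S) (x' : ℝ) :
    (medianPos S x < medianPos S (Function.update x i x') → x i ≤ medianPos S x) ∧
    (medianPos S (Function.update x i x') < medianPos S x → medianPos S x ≤ x i) := by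
  classical
  set s : Multiset ℝ := (S.erase i).val.map x with hs
  have hval : S.val = i ::ₘ (S.erase i).val := by
    rw [Finset.erase_val]
    exact (Multiset.cons_erase hi).symm
  have hmapx : S.val.map x = x i ::ₘ s := by rw [hval, Multiset.map_cons]
  have hmapu : ∀ j ∈ (S.erase i).val, Function.update x i x' j = x j := by
    intro j hj
    have : j ≠ i := by
      have := Finset.mem_erase.mp hj
      exact this.1
    simp [Function.update_of_ne this]
  have hmapx' : S.val.map (Function.update x i x') = x' ::ₘ s := by
    rw [hval, Multiset.map_cons]
    congr 1
    · simp
    · exact Multiset.map_congr rfl hmapu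
  have hcards : Multiset.card (x i ::ₘ s) = Multiset.card (x' ::ₘ s) := by simp
  set m := medianPos S x with hm
  set m' := medianPos S (Function.update x i x') with hm'
  have hmdef : m = medOf (x i ::ₘ s) := by rw [hm, medianPos, hmapx]
  have hmdef' : m' = medOf (x' ::ₘ s) := by rw [hm', medianPos, hmapx']
  have hc : 0 < Multiset.card (x i ::ₘ s) := by simp
  have hc' : 0 < Multiset.card (x' ::ₘ s) := by simp
  obtain ⟨hlt, hle⟩ := medOf_countP (x i ::ₘ s) hc
  rw [← hmdef] at hlt hle
  constructor
  · intro hmm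
    by_contra hcon
    push_neg at hcon
    -- x i > m; countP (≤ m) s ≥ (n+1)/2; then m' ≤ m
    have h1 : Multiset.countP (fun e => e ≤ m) (x i ::ₘ s) = Multiset.countP (fun e => e ≤ m) s := by
      rw [Multiset.countP_cons]
      simp [not_le.mpr hcon]
    have h2 : (Multiset.card (x' ::ₘ s) + 1) / 2 ≤ Multiset.countP (fun e => e ≤ m) (x' ::ₘ s) := by
      rw [Multiset.countP_cons, ← hcards]
      split <;> omega
    have := medOf_le (x' ::ₘ s) m hc' h2
    rw [← hmdef'] at this
    exact absurd hmm (not_lt.mpr this)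
  · intro hmm
    by_contra hcon
    push_neg at hcon
    -- x i < m
    have h1 : Multiset.countP (fun e => e < m) (x i ::ₘ s) = Multiset.countP (fun e => e < m) s + 1 := by
      rw [Multiset.countP_cons]
      simp [hcon]
    have h2 : Multiset.countP (fun e => e < m) (x' ::ₘ s) ≤ (Multiset.card (x' ::ₘ s) + 1) / 2 - 1 := by
      rw [Multiset.countP_cons, ← hcards]
      split <;> omega
    have := le_medOf (x' ::ₘ s) m hc' h2
    rw [← hmdef'] at this
    exact absurd hmm (not_lt.mpr this)

lemma tloc_spec (C : Finset ℝ) (hC : C.Nonempty) (p : ℝ) :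
    tloc C p ∈ C ∧ (∀ c ∈ C, |p - tloc C p| ≤ |p - c|) ∧
      (∀ c ∈ C, |p - c| ≤ |p - tloc C p| → tloc C p ≤ c) := by
  classical
  obtain ⟨a, ha, hamin⟩ := C.exists_min_image (fun c => |p - c|) hC
  set F := C.filter fun c => ∀ c' ∈ C, |p - c| ≤ |p - c'| with hF
  have haF : a ∈ F := Finset.mem_filter.2 ⟨ha, hamin⟩
  have hFne : F.Nonempty := ⟨a, haF⟩
  have htloc : tloc C p = F.min' hFne := by
    rw [tloc, ← hF, ← Finset.coe_min' hFne]
    rfl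
  have hmem : tloc C p ∈ F := htloc ▸ F.min'_mem hFne
  obtain ⟨hmemC, hmin⟩ := Finset.mem_filter.mp hmem
  refine ⟨hmemC, hmin, ?_⟩
  intro c hc hle
  have hcF : c ∈ F := by
    refine Finset.mem_filter.2 ⟨hc, fun c' hc' => le_trans hle (hmin c' hc')⟩
  rw [htloc]
  exact F.min'_le c hcF

lemma quad (a b c d : ℝ) (hab : a ≤ b) (hcd : c ≤ d) :
    |a - c| + |b - d| ≤ |a - d| + |b - c| := by
  rcases abs_cases (a - c) with ⟨h1, h1'⟩ | ⟨h1, h1'⟩ <;>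
  rcases abs_cases (b - d) with ⟨h2, h2'⟩ | ⟨h2, h2'⟩ <;>
  rcases abs_cases (a - d) with ⟨h3, h3'⟩ | ⟨h3, h3'⟩ <;>
  rcases abs_cases (b - c) with ⟨h4, h4'⟩ | ⟨h4, h4'⟩ <;> linarith

lemma tloc_dist_mono (D : Finset ℝ) (hD : D.Nonempty) (p m m' : ℝ)
    (h1 : m < m' → p ≤ m) (h2 : m' < m → m ≤ p) :
    |p - tloc D m| ≤ |p - tloc D m'| := by
  obtain ⟨htC, htmin, httie⟩ := tloc_spec D hD m
  obtain ⟨ht'C, ht'min, ht'tie⟩ := tloc_spec D hD m'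
  set t := tloc D m
  set t' := tloc D m'
  rcases lt_trichotomy m m' with hmm | hmm | hmm
  · have hp : p ≤ m := h1 hmm
    rcases le_or_gt t t' with htt | htt
    · have q := quad p m t t' hp htt
      have e1 := htmin t' ht'C
      linarith
    · have q := quad m m' t' t (le_of_lt hmm) (le_of_lt htt)
      have e1 := htmin t' ht'C
      have e2 := ht'min t htC
      have e3 : |m - t'| ≤ |m - t| := by linarith
      have := httie t' ht'C e3
      linarith
  · subst hmm; exact le_refl _
  · have hp : m ≤ p := h2 hmm
    rcases le_or_gt t' t with htt | htt
    · have q := quad m p t' t hp htt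
      have e1 := htmin t' ht'C
      linarith
    · have q := quad m' m t t' (le_of_lt hmm) (le_of_lt htt)
      have e1 := htmin t' ht'C
      have e2 := ht'min t htC
      have e3 : |m' - t| ≤ |m' - t'| := by linarith
      have := ht'tie t htC e3
      linarith

/-- `c` beats `f` in the nearest-candidate selection at reference point `m`. -/
def beats (m c f : ℝ) : Prop := |m - c| < |m - f| ∨ (|m - c| = |m - f| ∧ c < f)

lemma absA1 (z c f : ℝ) (h : c < f) (hz : 2*z ≤ c + f) : |z - c| ≤ |z - f| := by
  rcases abs_cases (z - c) with ⟨e1, _⟩ | ⟨e1, _⟩ <;>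
  rcases abs_cases (z - f) with ⟨e2, _⟩ | ⟨e2, _⟩ <;> linarith

lemma absA2 (z c f : ℝ) (h : c < f) (hz : |z - c| ≤ |z - f|) : 2*z ≤ c + f := by
  rcases abs_cases (z - c) with ⟨e1, _⟩ | ⟨e1, _⟩ <;>
  rcases abs_cases (z - f) with ⟨e2, _⟩ | ⟨e2, _⟩ <;> linarith

lemma absB1 (z c f : ℝ) (h : f < c) (hz : c + f < 2*z) : |z - c| < |z - f| := by
  rcases abs_cases (z - c) with ⟨e1, _⟩ | ⟨e1, _⟩ <;>
  rcases abs_cases (z - f) with ⟨e2, _⟩ | ⟨e2, _⟩ <;> linarith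

lemma absB2 (z c f : ℝ) (h : f < c) (hz : |z - c| < |z - f|) : c + f < 2*z := by
  rcases abs_cases (z - c) with ⟨e1, _⟩ | ⟨e1, _⟩ <;>
  rcases abs_cases (z - f) with ⟨e2, _⟩ | ⟨e2, _⟩ <;> linarith

lemma beats_transfer (m m' c f : ℝ) (h : beats m' c f)
    (hcond : (m ≤ m' ∧ m' ≤ f) ∨ (f ≤ m' ∧ m' ≤ m)) : beats m c f := by
  have hne : c ≠ f := by
    rcases h with h | ⟨_, h⟩
    · rintro rfl; exact lt_irrefl _ h
    · exact ne_of_lt h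
  rcases lt_or_gt_of_ne hne with hcf | hcf
  · have h2m' : 2*m' ≤ c + f := by
      apply absA2 _ _ _ hcf
      rcases h with h | ⟨heq, _⟩
      · exact le_of_lt h
      · exact le_of_eq heq
    rcases hcond with ⟨hmm', hm'f⟩ | ⟨hfm', hm'm⟩
    · have hle : |m - c| ≤ |m - f| := absA1 _ _ _ hcf (by linarith)
      rcases lt_or_eq_of_le hle with hlt | heq
      · exact Or.inl hlt
      · exact Or.inr ⟨heq, hcf⟩
    · exact absurd (by linarith : f ≤ c) (not_le.mpr hcf)
  · have hstrict : |m' - c| < |m' - f| := by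
      rcases h with h | ⟨_, hlt⟩
      · exact h
      · exact absurd hlt (not_lt.mpr (le_of_lt hcf))
    have h2m' := absB2 _ _ _ hcf hstrict
    rcases hcond with ⟨hmm', hm'f⟩ | ⟨hfm', hm'm⟩
    · exact absurd (by linarith : c < f) (not_lt.mpr (le_of_lt hcf))
    · exact Or.inl (absB1 _ _ _ hcf (by linarith))

lemma no_two_beaters (C : Finset ℝ) (hC : C.Nonempty) (m f c1 c2 : ℝ)
    (hf : f = tloc C m ∨ f = sloc C m)
    (hc1 : c1 ∈ C) (hc2 : c2 ∈ C) (hne : c1 ≠ c2)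
    (h1 : beats m c1 f) (h2 : beats m c2 f) : False := by
  obtain ⟨htC, htmin, httie⟩ := tloc_spec C hC m
  rcases hf with rfl | rfl
  · -- f = tloc C m : even one beater is impossible
    rcases h1 with h | ⟨heq, hlt⟩
    · exact absurd (htmin c1 hc1) (not_le.mpr h)
    · exact absurd (httie c1 hc1 (le_of_eq heq)) (not_le.mpr hlt)
  · -- f = sloc C m : a beater distinct from tloc must lie in C.erase (tloc C m)
    obtain ⟨c, hcC, hcne, hbc⟩ : ∃ c, c ∈ C ∧ c ≠ tloc C m ∧ beats m c (sloc C m) := by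
      rcases eq_or_ne c1 (tloc C m) with rfl | hg
      · exact ⟨c2, hc2, fun he => hne he.symm, h2⟩
      · exact ⟨c1, hc1, hg, h1⟩
    have hcE : c ∈ C.erase (tloc C m) := Finset.mem_erase.2 ⟨hcne, hcC⟩
    have hEne : (C.erase (tloc C m)).Nonempty := ⟨c, hcE⟩
    obtain ⟨hsC, hsmin, hstie⟩ := tloc_spec (C.erase (tloc C m)) hEne m
    rw [← sloc] at hsC hsmin hstie
    rcases hbc with h | ⟨heq, hlt⟩
    · exact absurd (hsmin c hcE) (not_le.mpr h)
    · exact absurd (hstie c hcE (le_of_eq heq)) (not_le.mpr hlt)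

lemma pair_dist_mono (C : Finset ℝ) (hC : 2 ≤ C.card) (p m m' : ℝ)
    (h1 : m < m' → p ≤ m) (h2 : m' < m → m ≤ p) :
    max |p - tloc C m| |p - sloc C m| ≤ max |p - tloc C m'| |p - sloc C m'| := by
  have hCne : C.Nonempty := Finset.card_pos.mp (by omega)
  rcases eq_or_ne m m' with rfl | hmne
  · exact le_refl _
  by_contra hcon
  push_neg at hcon
  -- the far element f of the pair at m
  obtain ⟨f, hf, hfd⟩ : ∃ f, (f = tloc C m ∨ f = sloc C m) ∧
      |p - f| = max |p - tloc C m| |p - sloc C m| := by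
    rcases max_cases |p - tloc C m| |p - sloc C m| with ⟨he, _⟩ | ⟨he, _⟩
    · exact ⟨tloc C m, Or.inl rfl, he.symm⟩
    · exact ⟨sloc C m, Or.inr rfl, he.symm⟩
  set t' := tloc C m' with ht'def
  set s' := sloc C m' with hs'def
  have ht'lt : |p - t'| < |p - f| := by rw [hfd]; exact lt_of_le_of_lt (le_max_left _ _) hcon
  have hs'lt : |p - s'| < |p - f| := by rw [hfd]; exact lt_of_le_of_lt (le_max_right _ _) hcon
  obtain ⟨ht'C, ht'min, ht'tie⟩ := tloc_spec C hCne m'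
  rw [← ht'def] at ht'C ht'min ht'tie
  have hfC : f ∈ C := by
    rcases hf with rfl | rfl
    · exact (tloc_spec C hCne m).1
    · obtain ⟨b, hb, hbne⟩ := Finset.exists_mem_ne (s := C) (by omega) (tloc C m)
      have : (C.erase (tloc C m)).Nonempty := ⟨b, Finset.mem_erase.2 ⟨hbne, hb⟩⟩
      exact Finset.mem_of_mem_erase ((tloc_spec _ this m).1)
  have hft' : f ≠ t' := by rintro rfl; exact lt_irrefl _ ht'lt
  have hfs' : f ≠ s' := by rintro rfl; exact lt_irrefl _ hs'lt
  have hfE : f ∈ C.erase t' := Finset.mem_erase.2 ⟨hft', hfC⟩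
  have hEne : (C.erase t').Nonempty := ⟨f, hfE⟩
  obtain ⟨hs'C, hs'min, hs'tie⟩ := tloc_spec (C.erase t') hEne m'
  rw [← sloc, ← hs'def] at hs'C hs'min hs'tie
  have ht's' : t' ≠ s' := fun he => (Finset.mem_erase.1 hs'C).1 he.symm
  have hs'inC : s' ∈ C := Finset.mem_of_mem_erase hs'C
  -- both t' and s' beat f at m'
  have hbt' : beats m' t' f := by
    rcases lt_or_eq_of_le (ht'min f hfC) with h | h
    · exact Or.inl h
    · exact Or.inr ⟨h, lt_of_le_of_ne (ht'tie f hfC (le_of_eq h.symm)) (Ne.symm hft')⟩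
  have hbs' : beats m' s' f := by
    rcases lt_or_eq_of_le (hs'min f hfE) with h | h
    · exact Or.inl h
    · exact Or.inr ⟨h, lt_of_le_of_ne (hs'tie f hfE (le_of_eq h.symm)) (Ne.symm hfs')⟩
  rcases lt_or_gt_of_ne hmne with hmm | hmm
  · -- p ≤ m < m'
    have hp : p ≤ m := h1 hmm
    rcases le_or_gt f p with hfp | hpf
    · -- f on the left: both beat f at m directly
      have key : ∀ c, |p - c| < |p - f| → beats m c f := by
        intro c hc
        left
        have e1 : |m - c| ≤ |m - p| + |p - c| := abs_sub_le m p c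
        have e2 : |m - p| = m - p := abs_of_nonneg (by linarith)
        have e3 : |p - f| = p - f := abs_of_nonneg (by linarith)
        have e4 : |m - f| = m - f := abs_of_nonneg (by linarith)
        linarith
      exact no_two_beaters C hCne m f t' s' hf ht'C hs'inC ht's' (key t' ht'lt) (key s' hs'lt)
    · rcases le_or_gt f m' with hfm' | hm'f
      · -- f between p and m' : contradiction using t' alone
        have e1 : m' - t' ≤ |m' - t'| := le_abs_self _
        have e2 : |m' - f| = m' - f := abs_of_nonneg (by linarith)
        have e3 : t' - p ≤ |p - t'| := by rw [abs_sub_comm]; exact le_abs_self _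
        have e4 : |p - f| = f - p := by rw [abs_sub_comm]; exact abs_of_nonneg (by linarith)
        have e5 := ht'min f hfC
        linarith
      · -- m ≤ m' ≤ f : transfer beats from m' to m
        have hcond : (m ≤ m' ∧ m' ≤ f) ∨ (f ≤ m' ∧ m' ≤ m) :=
          Or.inl ⟨le_of_lt hmm, le_of_lt hm'f⟩
        exact no_two_beaters C hCne m f t' s' hf ht'C hs'inC ht's'
          (beats_transfer m m' t' f hbt' hcond) (beats_transfer m m' s' f hbs' hcond)
  · -- m' < m ≤ p
    have hp : m ≤ p := h2 hmm
    rcases le_or_gt p f with hpf | hfp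
    · -- f on the right: both beat f at m directly
      have key : ∀ c, |p - c| < |p - f| → beats m c f := by
        intro c hc
        left
        have e1 : |m - c| ≤ |m - p| + |p - c| := abs_sub_le m p c
        have e2 : |m - p| = p - m := by rw [abs_sub_comm]; exact abs_of_nonneg (by linarith)
        have e3 : |p - f| = f - p := by rw [abs_sub_comm]; exact abs_of_nonneg (by linarith)
        have e4 : |m - f| = f - m := by rw [abs_sub_comm]; exact abs_of_nonneg (by linarith)
        linarith
      exact no_two_beaters C hCne m f t' s' hf ht'C hs'inC ht's' (key t' ht'lt) (key s' hs'lt)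
    · rcases le_or_gt m' f with hm'f | hfm'
      · -- f between m' and p : contradiction using t' alone
        have e1 : t' - m' ≤ |m' - t'| := by rw [abs_sub_comm]; exact le_abs_self _
        have e2 : |m' - f| = f - m' := by rw [abs_sub_comm]; exact abs_of_nonneg (by linarith)
        have e3 : p - t' ≤ |p - t'| := le_abs_self _
        have e4 : |p - f| = p - f := abs_of_nonneg (by linarith)
        have e5 := ht'min f hfC
        linarith
      · -- f ≤ m' ≤ m : transfer
        have hcond : (m ≤ m' ∧ m' ≤ f) ∨ (f ≤ m' ∧ m' ≤ m) :=
          Or.inr ⟨le_of_lt hfm', le_of_lt hmm⟩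
        exact no_two_beaters C hCne m f t' s' hf ht'C hs'inC ht's'
          (beats_transfer m m' t' f hbt' hcond) (beats_transfer m m' s' f hbs' hcond)

lemma w2_eq (C : Finset ℝ) (hC : C.Nonempty) (w1 m2 : ℝ) :
    (if tloc C m2 ≠ w1 then tloc C m2 else sloc C m2) = tloc (C.erase w1) m2 := by
  split_ifs with h
  · -- tloc C m2 ≠ w1
    obtain ⟨htC, htmin, httie⟩ := tloc_spec C hC m2
    have htE : tloc C m2 ∈ C.erase w1 := Finset.mem_erase.2 ⟨h, htC⟩
    have hEne : (C.erase w1).Nonempty := ⟨_, htE⟩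
    obtain ⟨ht'C, ht'min, ht'tie⟩ := tloc_spec (C.erase w1) hEne m2
    have ht'inC : tloc (C.erase w1) m2 ∈ C := Finset.mem_of_mem_erase ht'C
    have e1 : |m2 - tloc C m2| ≤ |m2 - tloc (C.erase w1) m2| := htmin _ ht'inC
    have e2 : |m2 - tloc (C.erase w1) m2| ≤ |m2 - tloc C m2| := ht'min _ htE
    exact le_antisymm (httie _ ht'inC e2) (ht'tie _ htE e1)
  · push_neg at h
    rw [sloc, h]

lemma erase_nonempty_of_two (C : Finset ℝ) (hC : 2 ≤ C.card) (w : ℝ) :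
    (C.erase w).Nonempty := by
  obtain ⟨b, hb, hbne⟩ := Finset.exists_mem_ne (s := C) (by omega) w
  exact ⟨b, Finset.mem_erase.2 ⟨hbne, hb⟩⟩

lemma key_lemma (x : ℕ → ℝ) (N1 N2 : Finset ℕ) (C : Finset ℝ) (hC : 2 ≤ C.card)
    (i : ℕ) (hi : i ∈ N1 ∨ i ∈ N2) (x' : ℝ) :
    cost x N1 N2 i (condMedian x N1 N2 C) ≤
      cost x N1 N2 i (condMedian (Function.update x i x') N1 N2 C) := by
  classical
  have hCne : C.Nonempty := Finset.card_pos.mp (by omega)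
  set u := Function.update x i x' with hu
  by_cases hcond : (N1 ∩ N2).card ≤ (N1 \ N2).card
  · have e1 : condMedian x N1 N2 C =
        (tloc C (medianPos (N1 \ N2) x),
          tloc (C.erase (tloc C (medianPos (N1 \ N2) x))) (medianPos N2 x)) := by
      simp only [condMedian, if_pos hcond]
      rw [w2_eq C hCne]
    have e2 : condMedian u N1 N2 C =
        (tloc C (medianPos (N1 \ N2) u),
          tloc (C.erase (tloc C (medianPos (N1 \ N2) u))) (medianPos N2 u)) := by
      simp only [condMedian, if_pos hcond]
      rw [w2_eq C hCne]
    rw [e1, e2]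
    by_cases hi1 : i ∈ N1 <;> by_cases hi2 : i ∈ N2
    · -- i ∈ N1 ∩ N2
      have hnot : i ∉ N1 \ N2 := by simp [hi2]
      have hm1 : medianPos (N1 \ N2) u = medianPos (N1 \ N2) x :=
        medianPos_update_of_not_mem _ _ _ hnot _
      rw [hm1]
      simp only [cost, if_pos hi1, if_pos hi2]
      apply max_le_max (le_refl _)
      obtain ⟨hmv1, hmv2⟩ := median_move N2 x i hi2 x'
      exact tloc_dist_mono _ (erase_nonempty_of_two C hC _) (x i) _ _ hmv1 hmv2
    · -- i ∈ N1 \ N2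
      have hmem : i ∈ N1 \ N2 := Finset.mem_sdiff.2 ⟨hi1, hi2⟩
      simp only [cost, if_pos hi1, if_neg hi2]
      obtain ⟨hmv1, hmv2⟩ := median_move (N1 \ N2) x i hmem x'
      exact tloc_dist_mono C hCne (x i) _ _ hmv1 hmv2
    · -- i ∈ N2 \ N1
      have hnot : i ∉ N1 \ N2 := by simp [hi1]
      have hm1 : medianPos (N1 \ N2) u = medianPos (N1 \ N2) x :=
        medianPos_update_of_not_mem _ _ _ hnot _
      rw [hm1]
      simp only [cost, if_neg hi1]
      obtain ⟨hmv1, hmv2⟩ := median_move N2 x i hi2 x'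
      exact tloc_dist_mono _ (erase_nonempty_of_two C hC _) (x i) _ _ hmv1 hmv2
    · exact absurd hi (by simp [hi1, hi2])
  · have e1 : condMedian x N1 N2 C =
        (tloc C (medianPos (N1 ∩ N2) x), sloc C (medianPos (N1 ∩ N2) x)) := by
      simp only [condMedian, if_neg hcond]
    have e2 : condMedian u N1 N2 C =
        (tloc C (medianPos (N1 ∩ N2) u), sloc C (medianPos (N1 ∩ N2) u)) := by
      simp only [condMedian, if_neg hcond]
    rw [e1, e2]
    by_cases hi12 : i ∈ N1 ∩ N2
    · obtain ⟨hi1, hi2⟩ := Finset.mem_inter.1 hi12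
      simp only [cost, if_pos hi1, if_pos hi2]
      obtain ⟨hmv1, hmv2⟩ := median_move (N1 ∩ N2) x i hi12 x'
      exact pair_dist_mono C hC (x i) _ _ hmv1 hmv2
    · have hm : medianPos (N1 ∩ N2) u = medianPos (N1 ∩ N2) x :=
        medianPos_update_of_not_mem _ _ _ hi12 _
      rw [hm]

lemma cost_swap (x : ℕ → ℝ) (N1 N2 : Finset ℕ) (i : ℕ) (hi : i ∈ N1 ∨ i ∈ N2) (y : ℝ × ℝ) :
    cost x N1 N2 i y.swap = cost x N2 N1 i y := by
  classical
  by_cases hi1 : i ∈ N1 <;> by_cases hi2 : i ∈ N2 <;>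
    simp [cost, hi1, hi2, Prod.swap, max_comm]
  exact absurd hi (by simp [hi1, hi2])

theorem conditionalMedian_strategyproof
    (N N1 N2 : Finset ℕ) (x : ℕ → ℝ) (C : Finset ℝ)
    (hN : N.Nonempty) (h1 : N1.Nonempty) (h2 : N2.Nonempty)
    (hU : N1 ∪ N2 = N) (hC : 2 ≤ C.card)
    (i : ℕ) (hi : i ∈ N) (x' : ℝ) :
    cost x N1 N2 i (mechOutput x N1 N2 C) ≤
      cost x N1 N2 i (mechOutput (Function.update x i x') N1 N2 C) := by
  classical
  have hiU : i ∈ N1 ∨ i ∈ N2 := by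
    rw [← hU] at hi
    exact Finset.mem_union.1 hi
  unfold mechOutput
  by_cases hcard : N2.card ≤ N1.card
  · rw [if_pos hcard, if_pos hcard]
    exact key_lemma x N1 N2 C hC i hiU x'
  · rw [if_neg hcard, if_neg hcard]
    rw [cost_swap x N1 N2 i hiU, cost_swap x N1 N2 i hiU]
    exact key_lemma x N2 N1 C hC i hiU.symm x'
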